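/- Generalized characterization of dependency: for any intuitionistic Kripke model M, team t, and standard formulas α₁,…,αₙ,β, the following are equivalent: (1) M,t ⊨ ?α₁∧⋯∧?αₙ → ?β; (2) for all w,w' ∈ R[t], if T(w,αᵢ) and T(w',αᵢ) are both defined and equal for all i ≤ n, then T(w,β) and T(w',β) are both defined and equal; (3) there exists f : {0,1}ⁿ → {0,1} such that for every w ∈ R[t], if T(w,α₁),…,T(w,αₙ) are all defined then T(w,β) is defined and T(w,β) = f(T(w,α₁),…,T(w,αₙ)). -/
import Mathlib


/-- Formulas of the language L: atoms, ⊥, ∧, ∨, →, and inquisitive disjunction ⩾. -/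
inductive Formula (P : Type) : Type
  | atom : P → Formula P
  | bot  : Formula P
  | and  : Formula P → Formula P → Formula P
  | or   : Formula P → Formula P → Formula P
  | impl : Formula P → Formula P → Formula P
  | iorr : Formula P → Formula P → Formula P

namespace Formula

/-- Negation ¬φ := φ → ⊥. -/
def neg {P : Type} (φ : Formula P) : Formula P := Formula.impl φ Formula.bot

/-- Polar question ?φ := φ ⩾ ¬φ. -/
def question {P : Type} (φ : Formula P) : Formula P := Formula.iorr φ φ.neg

/-- A standard formula contains no occurrence of inquisitive disjunction ⩾. -/
def standard {P : Type} : Formula P → Prop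
  | atom _ => True
  | bot => True
  | and φ ψ => φ.standard ∧ ψ.standard
  | or φ ψ => φ.standard ∧ ψ.standard
  | impl φ ψ => φ.standard ∧ ψ.standard
  | iorr _ _ => False

end Formula

/-- An intuitionistic Kripke model: a partially ordered set of worlds with a
persistent valuation. -/
structure KripkeModel (P : Type) where
  W : Type
  R : W → W → Prop
  refl : ∀ w, R w w
  antisymm : ∀ w v, R w v → R v w → w = v
  trans : ∀ w v u, R w v → R v u → R w u
  V : W → P → Prop
  persistent : ∀ w v p, R w v → V w p → V v p

/-- R[t], the up-set generated by a team t. -/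
def KripkeModel.upset {P : Type} (M : KripkeModel P) (t : Set M.W) : Set M.W :=
  {v | ∃ w ∈ t, M.R w v}

/-- The support relation M,t ⊨ φ between teams and formulas. -/
def support {P : Type} (M : KripkeModel P) : Formula P → Set M.W → Prop
  | .atom p, t => ∀ w ∈ t, M.V w p
  | .bot, t => t = ∅
  | .and φ ψ, t => support M φ t ∧ support M ψ t
  | .or φ ψ, t => ∃ t₁ t₂, t = t₁ ∪ t₂ ∧ support M φ t₁ ∧ support M ψ t₂
  | .impl φ ψ, t => ∀ t', t' ⊆ M.upset t → support M φ t' → support M ψ t'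
  | .iorr φ ψ, t => support M φ t ∨ support M ψ t

/-- Truth at a world: M,w ⊨ φ iff M,{w} ⊨ φ. -/
def truth {P : Type} (M : KripkeModel P) (w : M.W) (φ : Formula P) : Prop :=
  support M φ {w}

/-- A formula is truth-conditional if support at a team amounts to truth at each world. -/
def truthConditional {P : Type} (φ : Formula P) : Prop :=
  ∀ (M : KripkeModel P) (t : Set M.W), support M φ t ↔ ∀ w ∈ t, truth M w φ

/-- The partial truth-value function: `tvalIs M w φ b` says T(w,φ) is defined with value b
(b = true for value 1, i.e. M,w ⊨ φ; b = false for value 0, i.e. M,w ⊨ ¬φ). -/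
def tvalIs {P : Type} (M : KripkeModel P) (w : M.W) (φ : Formula P) : Bool → Prop
  | true => truth M w φ
  | false => truth M w φ.neg

/-- Big conjunction of a list of formulas (empty conjunction is the verum ⊥→⊥). -/
def bigConj {P : Type} : List (Formula P) → Formula P
  | [] => Formula.impl Formula.bot Formula.bot
  | [φ] => φ
  | φ :: ψ :: rest => Formula.and φ (bigConj (ψ :: rest))


section Aux
variable {P : Type}

lemma upset_mono (M : KripkeModel P) {t t' : Set M.W} (h : t' ⊆ t) :
    M.upset t' ⊆ M.upset t := fun v ⟨w, hw, hr⟩ => ⟨w, h hw, hr⟩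

lemma support_mono (M : KripkeModel P) (φ : Formula P) :
    ∀ t t' : Set M.W, t' ⊆ t → support M φ t → support M φ t' := by
  induction φ with
  | atom p => intro t t' h hs w hw; exact hs w (h hw)
  | bot => intro t t' h hs; rw [hs] at h; exact Set.subset_eq_empty h rfl
  | and φ ψ ihφ ihψ =>
      intro t t' h hs; exact ⟨ihφ t t' h hs.1, ihψ t t' h hs.2⟩
  | or φ ψ ihφ ihψ =>
      rintro t t' h ⟨t₁, t₂, rfl, h1, h2⟩
      refine ⟨t' ∩ t₁, t' ∩ t₂, ?_, ihφ _ _ Set.inter_subset_right h1,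
        ihψ _ _ Set.inter_subset_right h2⟩
      ext x
      constructor
      · intro hx; rcases h hx with hx1 | hx2
        · exact Or.inl ⟨hx, hx1⟩
        · exact Or.inr ⟨hx, hx2⟩
      · rintro (⟨hx, _⟩ | ⟨hx, _⟩) <;> exact hx
  | impl φ ψ ihφ ihψ =>
      intro t t' h hs s hsub hφ
      exact hs s (hsub.trans (upset_mono M h)) hφ
  | iorr φ ψ ihφ ihψ =>
      intro t t' h hs
      rcases hs with h1 | h2
      · exact Or.inl (ihφ t t' h h1)
      · exact Or.inr (ihψ t t' h h2)

lemma upset_empty (M : KripkeModel P) : M.upset (∅ : Set M.W) = ∅ := by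
  ext v; simp [KripkeModel.upset]

lemma support_empty (M : KripkeModel P) (φ : Formula P) :
    support M φ (∅ : Set M.W) := by
  induction φ with
  | atom p => intro w hw; exact absurd hw (Set.notMem_empty w)
  | bot => rfl
  | and _ _ ih1 ih2 => exact ⟨ih1, ih2⟩
  | or _ _ ih1 ih2 => exact ⟨∅, ∅, by simp, ih1, ih2⟩
  | impl φ ψ ih1 ih2 =>
      intro t' h _
      have ht' : t' = ∅ := Set.subset_eq_empty (by rwa [upset_empty] at h) rfl
      rw [ht']; exact ih2
  | iorr _ _ ih1 ih2 => exact Or.inl ih1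

lemma standard_tc (M : KripkeModel P) :
    ∀ (φ : Formula P), φ.standard →
      ∀ t : Set M.W, support M φ t ↔ ∀ w ∈ t, truth M w φ := by
  intro φ hst
  induction φ with
  | atom p =>
      intro t
      constructor
      · intro hs w hw v hv
        rw [Set.mem_singleton_iff] at hv; rw [hv]; exact hs w hw
      · intro h w hw; exact h w hw w rfl
  | bot =>
      intro t
      constructor
      · intro hs w hw; rw [hs] at hw; exact absurd hw (Set.notMem_empty w)
      · intro h
        ext w
        simp only [Set.mem_empty_iff_false, iff_false]
        intro hw
        exact absurd (h w hw) (by simp [truth, support, Set.singleton_ne_empty])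
  | and φ ψ ihφ ihψ =>
      obtain ⟨h1, h2⟩ := hst
      intro t
      rw [show support M (φ.and ψ) t = (support M φ t ∧ support M ψ t) from rfl,
        ihφ h1 t, ihψ h2 t]
      constructor
      · intro ⟨ha, hb⟩ w hw; exact ⟨ha w hw, hb w hw⟩
      · intro h; exact ⟨fun w hw => (h w hw).1, fun w hw => (h w hw).2⟩
  | or φ ψ ihφ ihψ =>
      obtain ⟨h1, h2⟩ := hst
      intro t
      constructor
      · rintro ⟨t₁, t₂, rfl, hs1, hs2⟩ w hw
        rcases hw with hw1 | hw2
        · exact ⟨{w}, ∅, by simp, support_mono M φ _ _ (by simpa using hw1) hs1,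
            support_empty M ψ⟩
        · exact ⟨∅, {w}, by simp, support_empty M φ,
            support_mono M ψ _ _ (by simpa using hw2) hs2⟩
      · intro h
        refine ⟨{w ∈ t | truth M w φ}, {w ∈ t | ¬ truth M w φ}, ?_, ?_, ?_⟩
        · ext w
          constructor
          · intro hw; by_cases hc : truth M w φ
            · exact Or.inl ⟨hw, hc⟩
            · exact Or.inr ⟨hw, hc⟩
          · rintro (⟨hw, _⟩ | ⟨hw, _⟩) <;> exact hw
        · rw [ihφ h1]; intro w hw; exact hw.2
        · rw [ihψ h2]
          intro w hw
          rcases h w hw.1 with ⟨s₁, s₂, hu, hs1, hs2⟩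
          have hsub1 : s₁ ⊆ ({w} : Set M.W) := hu ▸ Set.subset_union_left
          have hsub2 : s₂ ⊆ ({w} : Set M.W) := hu ▸ Set.subset_union_right
          rcases Set.subset_singleton_iff_eq.mp hsub2 with h2e | h2s
          · rcases Set.subset_singleton_iff_eq.mp hsub1 with h1e | h1s
            · rw [h1e, h2e, Set.union_empty] at hu
              exact absurd hu (Set.singleton_ne_empty w)
            · rw [h1s] at hs1; exact absurd hs1 hw.2
          · rw [h2s] at hs2; exact hs2
  | impl φ ψ ihφ ihψ =>
      obtain ⟨h1, h2⟩ := hst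
      intro t
      constructor
      · intro hs w hw s hsub hφs
        exact hs s (hsub.trans (upset_mono M (by simpa using hw))) hφs
      · intro h s hsub hφs
        rw [ihψ h2]
        intro v hv
        obtain ⟨w, hw, hr⟩ := hsub hv
        have hφv : support M φ {v} := support_mono M φ s {v} (by simpa using hv) hφs
        exact h w hw {v} (fun x hx => ⟨w, rfl, by rw [Set.mem_singleton_iff] at hx; rwa [hx]⟩) hφv
  | iorr φ ψ _ _ => exact absurd hst (by simp [Formula.standard])

lemma standard_neg {P : Type} {φ : Formula P} (h : φ.standard) : φ.neg.standard :=
  ⟨h, trivial⟩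

lemma tval_unique (M : KripkeModel P) (w : M.W) (φ : Formula P)
    {b c : Bool} (hb : tvalIs M w φ b) (hc : tvalIs M w φ c) : b = c := by
  have key : ¬ (truth M w φ ∧ truth M w φ.neg) := by
    rintro ⟨h1, h2⟩
    have hsub : ({w} : Set M.W) ⊆ M.upset {w} := by
      intro v hv; rw [Set.mem_singleton_iff] at hv; exact ⟨w, rfl, hv ▸ M.refl w⟩
    have : ({w} : Set M.W) = ∅ := h2 {w} hsub h1
    exact Set.singleton_ne_empty w this
  cases b <;> cases c
  · rfl
  · exact absurd ⟨hc, hb⟩ key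
  · exact absurd ⟨hb, hc⟩ key
  · rfl

lemma support_bigConj (M : KripkeModel P) :
    ∀ (l : List (Formula P)) (t : Set M.W),
      support M (bigConj l) t ↔ ∀ φ ∈ l, support M φ t
  | [], t => by
      simp only [bigConj, List.not_mem_nil, false_implies, implies_true, iff_true]
      intro t' _ h; exact h
  | [φ], t => by simp [bigConj]
  | φ :: ψ :: rest, t => by
      rw [show bigConj (φ :: ψ :: rest) = Formula.and φ (bigConj (ψ :: rest)) from rfl,
        show support M (Formula.and φ (bigConj (ψ :: rest))) t =
          (support M φ t ∧ support M (bigConj (ψ :: rest)) t) from rfl,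
        support_bigConj M (ψ :: rest) t]
      simp

end Aux

/-- generalized characterization of dependency for
?α₁ ∧ ⋯ ∧ ?αₙ → ?β: the three conditions (1), (2), (3) are equivalent. -/
theorem generalized_dependency_characterization {P : Type} (M : KripkeModel P)
    (t : Set M.W) (n : ℕ) (hn : 0 < n) (α : Fin n → Formula P) (β : Formula P)
    (hα : ∀ i, (α i).standard) (hβ : β.standard) :
    (support M (Formula.impl (bigConj (List.ofFn fun i => (α i).question))
        β.question) t ↔
      ∀ w ∈ M.upset t, ∀ w' ∈ M.upset t,
        (∀ i : Fin n, ∃ b : Bool, tvalIs M w (α i) b ∧ tvalIs M w' (α i) b) →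
        (∃ b : Bool, tvalIs M w β b ∧ tvalIs M w' β b)) ∧
    (support M (Formula.impl (bigConj (List.ofFn fun i => (α i).question))
        β.question) t ↔
      ∃ f : (Fin n → Bool) → Bool, ∀ w ∈ M.upset t, ∀ b : Fin n → Bool,
        (∀ i : Fin n, tvalIs M w (α i) (b i)) → tvalIs M w β (f b)) := by
  classical
  set Q : Formula P := bigConj (List.ofFn fun i => (α i).question) with hQdef
  -- support of Q at a team is support of each question
  have hQ : ∀ s : Set M.W, support M Q s ↔ ∀ i : Fin n, support M ((α i).question) s := by
    intro s
    rw [hQdef, support_bigConj]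
    constructor
    · intro h i; exact h _ (by rw [List.mem_ofFn]; exact ⟨i, rfl⟩)
    · intro h φ hφ
      rw [List.mem_ofFn] at hφ
      obtain ⟨i, rfl⟩ := hφ
      exact h i
  have tcβ := standard_tc M β hβ
  have tcβn := standard_tc M β.neg (standard_neg hβ)
  have tcα : ∀ i, ∀ s : Set M.W, support M (α i) s ↔ ∀ w ∈ s, truth M w (α i) :=
    fun i => standard_tc M (α i) (hα i)
  have tcαn : ∀ i, ∀ s : Set M.W, support M (α i).neg s ↔ ∀ w ∈ s, truth M w (α i).neg :=
    fun i => standard_tc M (α i).neg (standard_neg (hα i))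
  -- (1) → (2)
  have h12 : support M (Formula.impl Q β.question) t →
      ∀ w ∈ M.upset t, ∀ w' ∈ M.upset t,
        (∀ i : Fin n, ∃ b : Bool, tvalIs M w (α i) b ∧ tvalIs M w' (α i) b) →
        (∃ b : Bool, tvalIs M w β b ∧ tvalIs M w' β b) := by
    intro h1 w hw w' hw' hmatch
    have hsub : ({w, w'} : Set M.W) ⊆ M.upset t := by
      intro x hx; rcases hx with hx | hx
      · rwa [hx]
      · rw [Set.mem_singleton_iff] at hx; rwa [hx]
    have hQs : support M Q {w, w'} := by
      rw [hQ]
      intro i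
      obtain ⟨b, hb, hb'⟩ := hmatch i
      cases b with
      | true =>
          left
          rw [tcα i]
          intro x hx
          rcases hx with hx | hx
          · rwa [hx]
          · rw [Set.mem_singleton_iff] at hx; rwa [hx]
      | false =>
          right
          rw [tcαn i]
          intro x hx
          rcases hx with hx | hx
          · rwa [hx]
          · rw [Set.mem_singleton_iff] at hx; rwa [hx]
    have := h1 {w, w'} hsub hQs
    rcases this with hs | hs
    · rw [tcβ] at hs
      exact ⟨true, hs w (by left; rfl), hs w' (by right; rfl)⟩
    · rw [tcβn] at hs
      exact ⟨false, hs w (by left; rfl), hs w' (by right; rfl)⟩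
  -- (2) → (1)
  have h21 : (∀ w ∈ M.upset t, ∀ w' ∈ M.upset t,
        (∀ i : Fin n, ∃ b : Bool, tvalIs M w (α i) b ∧ tvalIs M w' (α i) b) →
        (∃ b : Bool, tvalIs M w β b ∧ tvalIs M w' β b)) →
      support M (Formula.impl Q β.question) t := by
    intro h2 s hsub hQs
    rcases Set.eq_empty_or_nonempty s with rfl | ⟨w₀, hw₀⟩
    · exact Or.inl (support_empty M β)
    rw [hQ] at hQs
    -- every world in s has a tval for each α i, all agreeing
    have hval : ∀ i : Fin n, ∃ b : Bool, ∀ w ∈ s, tvalIs M w (α i) b := by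
      intro i
      rcases hQs i with hs | hs
      · exact ⟨true, fun w hw => (tcα i s).mp hs w hw⟩
      · exact ⟨false, fun w hw => (tcαn i s).mp hs w hw⟩
    choose bv hbv using hval
    have hmatch : ∀ w ∈ s, ∀ i : Fin n,
        ∃ b : Bool, tvalIs M w (α i) b ∧ tvalIs M w₀ (α i) b :=
      fun w hw i => ⟨bv i, hbv i w hw, hbv i w₀ hw₀⟩
    obtain ⟨b₀, hb₀, _⟩ := h2 w₀ (hsub hw₀) w₀ (hsub hw₀) (hmatch w₀ hw₀)
    have hall : ∀ w ∈ s, tvalIs M w β b₀ := by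
      intro w hw
      obtain ⟨c, hcw, hcw₀⟩ := h2 w (hsub hw) w₀ (hsub hw₀) (hmatch w hw)
      rwa [tval_unique M w₀ β hcw₀ hb₀] at hcw
    cases b₀ with
    | true => exact Or.inl ((tcβ s).mpr hall)
    | false => exact Or.inr ((tcβn s).mpr hall)
  -- (2) → (3)
  have h23 : (∀ w ∈ M.upset t, ∀ w' ∈ M.upset t,
        (∀ i : Fin n, ∃ b : Bool, tvalIs M w (α i) b ∧ tvalIs M w' (α i) b) →
        (∃ b : Bool, tvalIs M w β b ∧ tvalIs M w' β b)) →
      ∃ f : (Fin n → Bool) → Bool, ∀ w ∈ M.upset t, ∀ b : Fin n → Bool,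
        (∀ i : Fin n, tvalIs M w (α i) (b i)) → tvalIs M w β (f b) := by
    intro h2
    have key : ∀ b : Fin n → Bool, ∀ w ∈ M.upset t, (∀ i, tvalIs M w (α i) (b i)) →
        ∀ w' ∈ M.upset t, (∀ i, tvalIs M w' (α i) (b i)) →
        ∃ c : Bool, tvalIs M w β c ∧ tvalIs M w' β c :=
      fun b w hw hb w' hw' hb' => h2 w hw w' hw' (fun i => ⟨b i, hb i, hb' i⟩)
    refine ⟨fun b =>
      if h : ∃ w ∈ M.upset t, ∀ i, tvalIs M w (α i) (b i) then
        (key b h.choose h.choose_spec.1 h.choose_spec.2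
          h.choose h.choose_spec.1 h.choose_spec.2).choose
      else true, ?_⟩
    intro w hw b hb
    have hE : ∃ w ∈ M.upset t, ∀ i, tvalIs M w (α i) (b i) := ⟨w, hw, hb⟩
    simp only [dif_pos hE]
    obtain ⟨d, hdw, hd₀⟩ := key b w hw hb hE.choose hE.choose_spec.1 hE.choose_spec.2
    have hc := (key b hE.choose hE.choose_spec.1 hE.choose_spec.2
      hE.choose hE.choose_spec.1 hE.choose_spec.2).choose_spec.1
    rwa [tval_unique M hE.choose β hd₀ hc] at hdw
  -- (3) → (2)
  have h32 : (∃ f : (Fin n → Bool) → Bool, ∀ w ∈ M.upset t, ∀ b : Fin n → Bool,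
        (∀ i : Fin n, tvalIs M w (α i) (b i)) → tvalIs M w β (f b)) →
      ∀ w ∈ M.upset t, ∀ w' ∈ M.upset t,
        (∀ i : Fin n, ∃ b : Bool, tvalIs M w (α i) b ∧ tvalIs M w' (α i) b) →
        (∃ b : Bool, tvalIs M w β b ∧ tvalIs M w' β b) := by
    rintro ⟨f, hf⟩ w hw w' hw' hmatch
    choose b hb hb' using hmatch
    exact ⟨f b, hf w hw b hb, hf w' hw' b hb'⟩
  exact ⟨⟨h12, h21⟩, ⟨fun h => h23 (h12 h), fun h => h21 (h32 h)⟩⟩
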